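/- arXiv:2401.09184 — 3 statements merged into one kernel-verified Lean document; each statement's English description precedes it below -/
import Mathlib

section
/- Let Θ ⊆ ℝ^d be a bounded measurable set with positive finite Lebesgue measure, let F : Θ → S^d_+(ℝ) be a measurable field of symmetric positive semidefinite matrices whose eigenvalues are all at most μ for some μ > 0, and let r̂ = max_{θ∈Θ} rank F(θ). Then for all ζ ∈ [0,1) and 0 < ε < 1, the two-scale effective dimension satisfies d_ζ(ε) ≤ ζ d + r̂ ( 1 − ζ + log(1 + μ^{1/2}) / |log ε| ). -/
open MeasureTheory Matrix

lemma aux_det_le {d : ℕ} (A : Matrix (Fin d) (Fin d) ℝ) (hA : A.PosSemidef)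
    (c s : ℝ) (hc : 0 ≤ c) (hs : 0 ≤ s)
    (hev : ∀ i, hA.1.eigenvalues i ≤ s) (r : ℕ) (hr : A.rank ≤ r) :
    1 ≤ ((1 : Matrix (Fin d) (Fin d) ℝ) + c • A).det ∧
      ((1 : Matrix (Fin d) (Fin d) ℝ) + c • A).det ≤ (1 + c * s) ^ r := by
  set hH := hA.1
  set U : Matrix (Fin d) (Fin d) ℝ := (hH.eigenvectorUnitary : Matrix (Fin d) (Fin d) ℝ)
  set lam := hH.eigenvalues
  have hUU : U * star U = 1 := Matrix.mem_unitaryGroup_iff.mp hH.eigenvectorUnitary.2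
  have hst : A = U * diagonal (RCLike.ofReal ∘ lam) * star U := hH.spectral_theorem
  have hdiag : (RCLike.ofReal ∘ lam : Fin d → ℝ) = lam := by
    funext i; simp [RCLike.ofReal]
  have hdet : ((1 : Matrix (Fin d) (Fin d) ℝ) + c • A).det = ∏ i, (1 + c * lam i) := by
    have h1 : (1 : Matrix (Fin d) (Fin d) ℝ) + c • A
        = U * (diagonal (fun i => 1 + c * lam i)) * star U := by
      have : (diagonal (fun i => 1 + c * lam i) : Matrix (Fin d) (Fin d) ℝ)
          = 1 + c • diagonal lam := by
        rw [← diagonal_one, ← diagonal_smul, ← diagonal_add]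
        rfl
      rw [this, mul_add, add_mul, mul_one, hUU, mul_smul_comm, smul_mul_assoc, hst, hdiag]
    have hdUU : det U * det (star U) = 1 := by rw [← det_mul, hUU, det_one]
    rw [h1, det_mul, det_mul, mul_right_comm, hdUU, one_mul, det_diagonal]
  have hlam0 : ∀ i, 0 ≤ lam i := hA.eigenvalues_nonneg
  constructor
  · rw [hdet]
    calc (1:ℝ) = ∏ _i : Fin d, (1:ℝ) := by simp
      _ ≤ ∏ i, (1 + c * lam i) :=
        Finset.prod_le_prod (fun i _ => zero_le_one) (fun i _ => by nlinarith [hlam0 i])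
  · rw [hdet]
    classical
    have hsub : ∏ i, (1 + c * lam i)
        = ∏ i ∈ Finset.univ.filter (fun i => lam i ≠ 0), (1 + c * lam i) := by
      refine (Finset.prod_subset (Finset.filter_subset _ _) ?_).symm
      intro i _ hi
      simp only [Finset.mem_filter, Finset.mem_univ, true_and, not_not] at hi
      simp [hi]
    rw [hsub]
    calc ∏ i ∈ Finset.univ.filter (fun i => lam i ≠ 0), (1 + c * lam i)
        ≤ ∏ _i ∈ Finset.univ.filter (fun i => lam i ≠ 0), (1 + c * s) := by
          refine Finset.prod_le_prod (fun i _ => by nlinarith [hlam0 i]) ?_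
          intro i _
          have := hev i
          nlinarith
      _ = (1 + c * s) ^ (Finset.univ.filter (fun i => lam i ≠ 0)).card := by
          rw [Finset.prod_const]
      _ ≤ (1 + c * s) ^ r := by
          apply pow_le_pow_right₀ (by nlinarith)
          have hcard : (Finset.univ.filter (fun i => lam i ≠ 0)).card
              = Fintype.card {i // lam i ≠ 0} := (Fintype.card_subtype _).symm
          rw [hcard]
          exact le_trans (le_of_eq hH.rank_eq_card_non_zero_eigs.symm) hr

lemma aux_eig_le {d : ℕ} (B : Matrix (Fin d) (Fin d) ℝ) (hB : B.PosSemidef)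
    (μ : ℝ) (hμ : 0 ≤ μ)
    (h : ∀ v : Fin d → ℝ, v ⬝ᵥ (B * B).mulVec v ≤ μ * (v ⬝ᵥ v)) (i : Fin d) :
    hB.1.eigenvalues i ≤ Real.sqrt μ := by
  set lam := hB.1.eigenvalues i with hlamdef
  set v : Fin d → ℝ := ⇑(hB.1.eigenvectorBasis i) with hvdef
  have hv : B *ᵥ v = lam • v := hB.1.mulVec_eigenvectorBasis i
  have hvne : v ≠ 0 := by
    have hne := hB.1.eigenvectorBasis.orthonormal.ne_zero i
    intro h0
    apply hne
    ext j
    exact congrFun h0 j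
  have hBB : (B * B) *ᵥ v = (lam * lam) • v := by
    rw [← mulVec_mulVec, hv, mulVec_smul, hv, smul_smul]
  have hdot : v ⬝ᵥ ((B * B) *ᵥ v) = (lam * lam) * (v ⬝ᵥ v) := by
    rw [hBB, dotProduct_smul, smul_eq_mul]
  have hvv : 0 < v ⬝ᵥ v := by
    rcases lt_or_eq_of_le (Finset.sum_nonneg fun j _ => mul_self_nonneg (v j) : 0 ≤ v ⬝ᵥ v) with h' | h'
    · exact h'
    · exact absurd (dotProduct_self_eq_zero.mp h'.symm) hvne
  have hmu := h v
  rw [hdot] at hmu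
  have hll : lam * lam ≤ μ := le_of_mul_le_mul_right (by linarith) hvv
  have h0 : 0 ≤ lam := hB.eigenvalues_nonneg i
  nlinarith [Real.sq_sqrt hμ, Real.sqrt_nonneg μ]

/-- **upper bound on the two-scale effective dimension.**
Let `Θ ⊆ ℝ^d` be a bounded measurable set with positive finite Lebesgue measure, let
`F : Θ → S^d_+(ℝ)` be a measurable field of symmetric positive semidefinite matrices whose
eigenvalues are all at most `μ > 0` (equivalently `⟨F(θ)v, v⟩ ≤ μ |v|²` for all `v`), and let
`r̂ = max_{θ∈Θ} rank F(θ)`.  Then for all `ζ ∈ [0,1)` and `0 < ε < 1`,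
`d_ζ(ε) ≤ ζ d + r̂ (1 − ζ + log(1 + μ^{1/2}) / |log ε|)`, where
`d_ζ(ε) = ζ d + log( ⨍_Θ det(I_d + ε^{ζ−1} F(θ)^{1/2}) dθ ) / |log ε|`. -/
theorem twoScaleEffectiveDimension_le
    {d : ℕ} (Θ : Set (Fin d → ℝ)) (hmeasΘ : MeasurableSet Θ)
    (hbdd : Bornology.IsBounded Θ) (hpos : 0 < volume Θ) (hfin : volume Θ ≠ ⊤)
    (F Fsqrt : (Fin d → ℝ) → Matrix (Fin d) (Fin d) ℝ)
    (hFmeas : ∀ i j, Measurable fun θ => F θ i j)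
    (hFsqrtmeas : ∀ i j, Measurable fun θ => Fsqrt θ i j)
    (hpsd : ∀ θ ∈ Θ, (F θ).PosSemidef)
    (hsqrt : ∀ θ ∈ Θ, (Fsqrt θ).PosSemidef ∧ Fsqrt θ * Fsqrt θ = F θ)
    (μ : ℝ) (hμ : 0 < μ)
    (hev : ∀ θ ∈ Θ, ∀ v : Fin d → ℝ, v ⬝ᵥ (F θ).mulVec v ≤ μ * (v ⬝ᵥ v))
    (rhat : ℕ)
    (hattain : ∃ θ₀ ∈ Θ, (F θ₀).rank = rhat)
    (hmax : ∀ θ ∈ Θ, (F θ).rank ≤ rhat)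
    (ζ ε : ℝ) (hζ0 : 0 ≤ ζ) (hζ1 : ζ < 1) (hε0 : 0 < ε) (hε1 : ε < 1) :
    ζ * d + Real.log ((volume Θ).toReal⁻¹ *
        ∫ θ in Θ, ((1 : Matrix (Fin d) (Fin d) ℝ) + ε ^ (ζ - 1) • Fsqrt θ).det) / |Real.log ε|
      ≤ ζ * d + rhat * (1 - ζ + Real.log (1 + Real.sqrt μ) / |Real.log ε|) := by
  classical
  set c : ℝ := ε ^ (ζ - 1) with hcdef
  have hc1 : 1 ≤ c :=
    Real.one_le_rpow_of_pos_of_le_one_of_nonpos hε0 hε1.le (by linarith)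
  have hc0 : 0 ≤ c := by linarith
  have hsμ : 0 ≤ Real.sqrt μ := Real.sqrt_nonneg μ
  set C : ℝ := (1 + c * Real.sqrt μ) ^ rhat with hCdef
  have hC1 : (1 : ℝ) ≤ C := one_le_pow₀ (by nlinarith)
  set f : (Fin d → ℝ) → ℝ :=
    fun θ => ((1 : Matrix (Fin d) (Fin d) ℝ) + c • Fsqrt θ).det with hfdef
  -- pointwise bounds
  have hbound : ∀ θ ∈ Θ, 1 ≤ f θ ∧ f θ ≤ C := by
    intro θ hθ
    obtain ⟨hB, hBB⟩ := hsqrt θ hθ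
    have heig : ∀ i, hB.1.eigenvalues i ≤ Real.sqrt μ := by
      intro i
      exact aux_eig_le (Fsqrt θ) hB μ hμ.le (by rw [hBB]; exact hev θ hθ) i
    have hrank : (Fsqrt θ).rank ≤ rhat := by
      have : ((Fsqrt θ)ᴴ * Fsqrt θ).rank = (Fsqrt θ).rank :=
        Matrix.rank_conjTranspose_mul_self _
      rw [hB.1, hBB] at this
      rw [← this]
      exact hmax θ hθ
    exact aux_det_le (Fsqrt θ) hB c (Real.sqrt μ) hc0 hsμ heig rhat hrank
  -- measurability of f
  have hfmeas : Measurable f := by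
    have hdeq : f = fun θ => ∑ σ : Equiv.Perm (Fin d), Equiv.Perm.sign σ •
        ∏ i, ((1 : Matrix (Fin d) (Fin d) ℝ) + c • Fsqrt θ) (σ i) i :=
      funext fun θ => Matrix.det_apply _
    rw [hdeq]
    apply Finset.measurable_sum
    intro σ _
    simp only [Units.smul_def, zsmul_eq_mul, Matrix.add_apply, Matrix.smul_apply, smul_eq_mul]
    apply Measurable.const_mul
    apply Finset.measurable_prod
    intro i _
    exact measurable_const.add ((hFsqrtmeas (σ i) i).const_mul c)
  -- integrability
  have hint : IntegrableOn f Θ := by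
    apply Measure.integrableOn_of_bounded hfin hfmeas.aestronglyMeasurable (M := C)
    rw [ae_restrict_iff' hmeasΘ]
    filter_upwards with θ hθ
    have := hbound θ hθ
    rw [Real.norm_eq_abs, abs_of_nonneg (by linarith [this.1])]
    exact this.2
  have hvol : 0 < (volume Θ).toReal := ENNReal.toReal_pos hpos.ne' hfin
  -- integral bounds
  have hintC : IntegrableOn (fun _ => C) Θ := integrableOn_const hfin
  have hint1 : IntegrableOn (fun _ => (1 : ℝ)) Θ := integrableOn_const hfin
  have hile : ∫ θ in Θ, f θ ≤ (volume Θ).toReal * C := by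
    calc ∫ θ in Θ, f θ ≤ ∫ _θ in Θ, C :=
          setIntegral_mono_on hint hintC hmeasΘ fun θ hθ => (hbound θ hθ).2
      _ = (volume Θ).toReal * C := by rw [setIntegral_const, smul_eq_mul, measureReal_def]
  have hige : (volume Θ).toReal ≤ ∫ θ in Θ, f θ := by
    calc (volume Θ).toReal = ∫ _θ in Θ, (1 : ℝ) := by rw [setIntegral_const, smul_eq_mul, mul_one, measureReal_def]
      _ ≤ ∫ θ in Θ, f θ :=
          setIntegral_mono_on hint1 hint hmeasΘ fun θ hθ => (hbound θ hθ).1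
  set avg : ℝ := (volume Θ).toReal⁻¹ * ∫ θ in Θ, f θ with havgdef
  have havg1 : 1 ≤ avg := by
    rw [havgdef]
    calc (1:ℝ) = (volume Θ).toReal⁻¹ * (volume Θ).toReal := (inv_mul_cancel₀ hvol.ne').symm
      _ ≤ _ := mul_le_mul_of_nonneg_left hige (inv_nonneg.mpr hvol.le)
  have havgC : avg ≤ C := by
    rw [havgdef]
    calc (volume Θ).toReal⁻¹ * ∫ θ in Θ, f θ
        ≤ (volume Θ).toReal⁻¹ * ((volume Θ).toReal * C) :=
          mul_le_mul_of_nonneg_left hile (inv_nonneg.mpr hvol.le)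
      _ = C := by field_simp
  -- log bounds
  have hlogε : Real.log ε < 0 := Real.log_neg hε0 hε1
  have habs : |Real.log ε| = -Real.log ε := abs_of_neg hlogε
  have habspos : 0 < |Real.log ε| := abs_pos.mpr hlogε.ne
  have hlogavg : Real.log avg ≤ rhat * ((1 - ζ) * |Real.log ε| + Real.log (1 + Real.sqrt μ)) := by
    have h1 : Real.log avg ≤ Real.log C := Real.log_le_log (by linarith) havgC
    have h2 : Real.log C = rhat * Real.log (1 + c * Real.sqrt μ) := by
      rw [hCdef, Real.log_pow]
    have h3 : Real.log (1 + c * Real.sqrt μ) ≤ (1 - ζ) * |Real.log ε| + Real.log (1 + Real.sqrt μ) := by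
      have hle : 1 + c * Real.sqrt μ ≤ c * (1 + Real.sqrt μ) := by nlinarith
      have h4 : Real.log (1 + c * Real.sqrt μ) ≤ Real.log (c * (1 + Real.sqrt μ)) :=
        Real.log_le_log (by nlinarith) hle
      have h5 : Real.log (c * (1 + Real.sqrt μ)) = Real.log c + Real.log (1 + Real.sqrt μ) :=
        Real.log_mul (by linarith) (by linarith)
      have h6 : Real.log c = (1 - ζ) * |Real.log ε| := by
        rw [hcdef, Real.log_rpow hε0, habs]; ring
      linarith
    calc Real.log avg ≤ rhat * Real.log (1 + c * Real.sqrt μ) := by rw [← h2]; exact h1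
      _ ≤ rhat * ((1 - ζ) * |Real.log ε| + Real.log (1 + Real.sqrt μ)) := by
        apply mul_le_mul_of_nonneg_left h3 (Nat.cast_nonneg rhat)
  -- conclude
  have hmain : Real.log avg / |Real.log ε|
      ≤ rhat * (1 - ζ + Real.log (1 + Real.sqrt μ) / |Real.log ε|) := by
    rw [div_le_iff₀ habspos]
    calc Real.log avg ≤ rhat * ((1 - ζ) * |Real.log ε| + Real.log (1 + Real.sqrt μ)) := hlogavg
      _ = rhat * (1 - ζ + Real.log (1 + Real.sqrt μ) / |Real.log ε|) * |Real.log ε| := by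
        field_simp
  linarith [hmain]
end

section
/- Let Θ ⊆ ℝ^d and let A : Θ → S^d_+(ℝ) be an L-Lipschitz matrix field (with respect to the Frobenius norm). Then for every β > 0, every vector v ∈ ℝ^d, and all θ₁, θ₂ ∈ Θ, one has ‖v‖²_{A_β(θ₂)} ≤ (3 + L β^{−1} |θ₁ − θ₂|) ‖v‖²_{A_β(θ₁)}. -/
open Matrix

theorem quad_eq {d : ℕ} (c : Fin d → ℝ) (u : Fin d → (Fin d → ℝ)) (v : Fin d → ℝ) :
    ((∑ j, c j • vecMulVec (u j) (u j)).mulVec v) ⬝ᵥ v = ∑ j, c j * (u j ⬝ᵥ v)^2 := by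
  simp only [mulVec, dotProduct, vecMulVec, Matrix.sum_apply, Matrix.smul_apply,
    Matrix.of_apply, smul_eq_mul, pow_two, Finset.sum_mul, Finset.mul_sum]
  refine Eq.trans (Finset.sum_congr rfl fun x _ => Finset.sum_comm) ?_
  rw [Finset.sum_comm]
  refine Finset.sum_congr rfl fun j _ => ?_
  conv_rhs => rw [Finset.sum_comm]
  exact Finset.sum_congr rfl fun a _ => Finset.sum_congr rfl fun b _ => by ring

theorem orth_complete {d : ℕ} (u : Fin d → (Fin d → ℝ))
    (h : ∀ i j, u i ⬝ᵥ u j = if i = j then (1 : ℝ) else 0) (v : Fin d → ℝ) :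
    ∑ j, (u j ⬝ᵥ v)^2 = v ⬝ᵥ v := by
  set U : Matrix (Fin d) (Fin d) ℝ := Matrix.of u with hU
  have h1 : U * Uᵀ = 1 := by
    ext i j
    simpa [Matrix.mul_apply, dotProduct, Matrix.one_apply, hU] using h i j
  have h2 : Uᵀ * U = 1 := mul_eq_one_comm.mp h1
  have key : ∑ j, (u j ⬝ᵥ v)^2 = (U *ᵥ v) ⬝ᵥ (U *ᵥ v) := by
    simp [dotProduct, mulVec, pow_two, hU]
  rw [key, Matrix.dotProduct_mulVec, ← Matrix.mulVec_transpose, Matrix.mulVec_mulVec, h2,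
    Matrix.one_mulVec]

theorem quad_cs {d : ℕ} (M : Matrix (Fin d) (Fin d) ℝ) (v : Fin d → ℝ) :
    (M.mulVec v) ⬝ᵥ v ≤ Real.sqrt (∑ i, ∑ j, (M i j) ^ 2) * (v ⬝ᵥ v) := by
  have hvv : (0:ℝ) ≤ v ⬝ᵥ v := Finset.sum_nonneg fun i _ => mul_self_nonneg _
  have h1 : (M.mulVec v) ⬝ᵥ v = ∑ p : Fin d × Fin d, M p.1 p.2 * (v p.1 * v p.2) := by
    rw [show (∑ p : Fin d × Fin d, M p.1 p.2 * (v p.1 * v p.2))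
        = ∑ i, ∑ j, M i j * (v i * v j) from by
      rw [← Finset.univ_product_univ, Finset.sum_product]]
    simp only [mulVec, dotProduct, Finset.sum_mul]
    exact Finset.sum_congr rfl fun i _ => Finset.sum_congr rfl fun j _ => by ring
  have h2 := Real.sum_mul_le_sqrt_mul_sqrt Finset.univ
      (fun p : Fin d × Fin d => M p.1 p.2) (fun p : Fin d × Fin d => v p.1 * v p.2)
  have h3 : (∑ p : Fin d × Fin d, (M p.1 p.2) ^ 2) = ∑ i, ∑ j, (M i j) ^ 2 := by
    rw [← Finset.univ_product_univ, Finset.sum_product]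
  have h4 : Real.sqrt (∑ p : Fin d × Fin d, (v p.1 * v p.2) ^ 2) = v ⬝ᵥ v := by
    have he : (∑ p : Fin d × Fin d, (v p.1 * v p.2) ^ 2) = (v ⬝ᵥ v) ^ 2 := by
      rw [← Finset.univ_product_univ, Finset.sum_product]
      simp only [dotProduct, pow_two, Finset.sum_mul, Finset.mul_sum]
      exact Finset.sum_congr rfl fun i _ => Finset.sum_congr rfl fun j _ => by ring
    rw [he, Real.sqrt_sq hvv]
  calc (M.mulVec v) ⬝ᵥ v = ∑ p : Fin d × Fin d, M p.1 p.2 * (v p.1 * v p.2) := h1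
    _ ≤ _ := h2
    _ = Real.sqrt (∑ i, ∑ j, (M i j) ^ 2) * (v ⬝ᵥ v) := by rw [h3, h4]

/-- **Lemma 2 of the paper.** Let `Θ ⊆ ℝ^d` and let `A : Θ → S^d_+(ℝ)` be an
`L`-Lipschitz matrix field with respect to the Frobenius norm.  For `β > 0`, `A_β(θ)` is
obtained from a spectral decomposition of `A(θ)` by replacing every eigenvalue smaller than `β`
with `β`.  Then for every `β > 0`, every `v ∈ ℝ^d` and all `θ₁, θ₂ ∈ Θ`,
`‖v‖²_{A_β(θ₂)} ≤ (3 + L β⁻¹ |θ₁ − θ₂|) ‖v‖²_{A_β(θ₁)}`. -/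
theorem beta_truncated_quadratic_forms_comparable_of_lipschitz
    {d : ℕ} (Θ : Set (Fin d → ℝ)) (L : ℝ)
    (A : (Fin d → ℝ) → Matrix (Fin d) (Fin d) ℝ)
    (hLip : ∀ θ₁ ∈ Θ, ∀ θ₂ ∈ Θ,
      Real.sqrt (∑ i, ∑ j, (A θ₁ i j - A θ₂ i j) ^ 2)
        ≤ L * Real.sqrt (∑ i, (θ₁ i - θ₂ i) ^ 2))
    (Aβ : ℝ → (Fin d → ℝ) → Matrix (Fin d) (Fin d) ℝ)
    (hAβ : ∀ β > (0 : ℝ), ∀ θ ∈ Θ, ∃ (u : Fin d → (Fin d → ℝ)) (lam : Fin d → ℝ),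
        (∀ i j, u i ⬝ᵥ u j = if i = j then (1 : ℝ) else 0) ∧ (∀ j, 0 ≤ lam j) ∧
        A θ = ∑ j, lam j • vecMulVec (u j) (u j) ∧
        Aβ β θ = ∑ j, max (lam j) β • vecMulVec (u j) (u j)) :
    ∀ β > (0 : ℝ), ∀ v : Fin d → ℝ, ∀ θ₁ ∈ Θ, ∀ θ₂ ∈ Θ,
      ((Aβ β θ₂).mulVec v) ⬝ᵥ v
        ≤ (3 + L * β⁻¹ * Real.sqrt (∑ i, (θ₁ i - θ₂ i) ^ 2)) * (((Aβ β θ₁).mulVec v) ⬝ᵥ v) := by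
  intro β hβ v θ₁ hθ₁ θ₂ hθ₂
  obtain ⟨u, lam, hu, hlam, hAu, hAβu⟩ := hAβ β hβ θ₁ hθ₁
  obtain ⟨w, mu, hw, hmu, hAw, hAβw⟩ := hAβ β hβ θ₂ hθ₂
  set s := Real.sqrt (∑ i, (θ₁ i - θ₂ i) ^ 2) with hs
  have hF := hLip θ₁ hθ₁ θ₂ hθ₂
  have hLs0 : 0 ≤ L * s := le_trans (Real.sqrt_nonneg _) hF
  have hvu : v ⬝ᵥ v = ∑ j, (u j ⬝ᵥ v) ^ 2 := (orth_complete u hu v).symm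
  have hvw : v ⬝ᵥ v = ∑ j, (w j ⬝ᵥ v) ^ 2 := (orth_complete w hw v).symm
  have hvv0 : (0:ℝ) ≤ v ⬝ᵥ v := Finset.sum_nonneg fun i _ => mul_self_nonneg _
  have e1 : ((Aβ β θ₁).mulVec v) ⬝ᵥ v = ∑ j, max (lam j) β * (u j ⬝ᵥ v) ^ 2 := by
    rw [hAβu]; exact quad_eq _ _ _
  have e2 : ((Aβ β θ₂).mulVec v) ⬝ᵥ v = ∑ j, max (mu j) β * (w j ⬝ᵥ v) ^ 2 := by
    rw [hAβw]; exact quad_eq _ _ _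
  have eA1 : ((A θ₁).mulVec v) ⬝ᵥ v = ∑ j, lam j * (u j ⬝ᵥ v) ^ 2 := by
    rw [hAu]; exact quad_eq _ _ _
  have eA2 : ((A θ₂).mulVec v) ⬝ᵥ v = ∑ j, mu j * (w j ⬝ᵥ v) ^ 2 := by
    rw [hAw]; exact quad_eq _ _ _
  -- step 1 : q2β ≤ qA2 + β * |v|²
  have c1 : ((Aβ β θ₂).mulVec v) ⬝ᵥ v ≤ ((A θ₂).mulVec v) ⬝ᵥ v + β * (v ⬝ᵥ v) := by
    rw [e2, eA2, hvw, Finset.mul_sum, ← Finset.sum_add_distrib]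
    refine Finset.sum_le_sum fun j _ => ?_
    have : max (mu j) β ≤ mu j + β :=
      max_le (le_add_of_nonneg_right hβ.le) (le_add_of_nonneg_left (hmu j))
    nlinarith [sq_nonneg (w j ⬝ᵥ v)]
  -- step 2 : qA2 ≤ qA1 + L s |v|²
  have c2 : ((A θ₂).mulVec v) ⬝ᵥ v ≤ ((A θ₁).mulVec v) ⬝ᵥ v + L * s * (v ⬝ᵥ v) := by
    have hcs := quad_cs (A θ₂ - A θ₁) v
    have hsub : ((A θ₂ - A θ₁).mulVec v) ⬝ᵥ v
        = ((A θ₂).mulVec v) ⬝ᵥ v - ((A θ₁).mulVec v) ⬝ᵥ v := by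
      rw [Matrix.sub_mulVec, sub_dotProduct]
    have hsq : (∑ i, ∑ j, ((A θ₂ - A θ₁) i j) ^ 2)
        = ∑ i, ∑ j, (A θ₁ i j - A θ₂ i j) ^ 2 := by
      refine Finset.sum_congr rfl fun i _ => Finset.sum_congr rfl fun j _ => ?_
      rw [Matrix.sub_apply]; ring
    rw [hsub, hsq] at hcs
    have hmul : Real.sqrt (∑ i, ∑ j, (A θ₁ i j - A θ₂ i j) ^ 2) * (v ⬝ᵥ v)
        ≤ L * s * (v ⬝ᵥ v) := mul_le_mul_of_nonneg_right hF hvv0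
    linarith
  -- step 3 : qA1 ≤ q1β
  have c3 : ((A θ₁).mulVec v) ⬝ᵥ v ≤ ((Aβ β θ₁).mulVec v) ⬝ᵥ v := by
    rw [eA1, e1]
    exact Finset.sum_le_sum fun j _ =>
      mul_le_mul_of_nonneg_right (le_max_left _ _) (sq_nonneg _)
  -- step 4 : β |v|² ≤ q1β
  have c4 : β * (v ⬝ᵥ v) ≤ ((Aβ β θ₁).mulVec v) ⬝ᵥ v := by
    rw [e1, hvu, Finset.mul_sum]
    exact Finset.sum_le_sum fun j _ =>
      mul_le_mul_of_nonneg_right (le_max_right _ _) (sq_nonneg _)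
  have c5 : 0 ≤ ((Aβ β θ₁).mulVec v) ⬝ᵥ v := le_trans (by positivity) c4
  have c6 : v ⬝ᵥ v ≤ β⁻¹ * (((Aβ β θ₁).mulVec v) ⬝ᵥ v) := by
    calc v ⬝ᵥ v = β⁻¹ * (β * (v ⬝ᵥ v)) := by field_simp
      _ ≤ β⁻¹ * (((Aβ β θ₁).mulVec v) ⬝ᵥ v) :=
        mul_le_mul_of_nonneg_left c4 (inv_nonneg.mpr hβ.le)
  have hprod : L * s * (v ⬝ᵥ v) ≤ L * β⁻¹ * s * (((Aβ β θ₁).mulVec v) ⬝ᵥ v) := by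
    calc L * s * (v ⬝ᵥ v) ≤ L * s * (β⁻¹ * (((Aβ β θ₁).mulVec v) ⬝ᵥ v)) :=
          mul_le_mul_of_nonneg_left c6 hLs0
      _ = L * β⁻¹ * s * (((Aβ β θ₁).mulVec v) ⬝ᵥ v) := by ring
  nlinarith [c1, c2, c3, c4, c5, hprod]
end

section
/- Let L ≥ 1, let (Θ_j, μ_j), j = 1, …, L, be probability spaces, and for each j let g_j : Θ_1 × ⋯ × Θ_j → [1, ∞) be measurable with ∫ ∏_{j=1}^m g_j d(μ_1 ⊗ ⋯ ⊗ μ_m) < ∞ for every m ≤ L. For m = 2, …, L let P_m be the probability measure on Θ_1 × ⋯ × Θ_{m−1} whose density with respect to μ_1 ⊗ ⋯ ⊗ μ_{m−1} is ∏_{j=1}^{m−1} g_j divided by ∫ ∏_{j=1}^{m−1} g_j d(μ_1 ⊗ ⋯ ⊗ μ_{m−1}). Then log ∫ ∏_{j=1}^L g_j d(μ_1 ⊗ ⋯ ⊗ μ_L) ≥ log ∫ g_1 dμ_1 + Σ_{m=2}^L ∫ ( ∫ log g_m dμ_m ) dP_m. Consequently, taking g_j(θ_1,…,θ_j) = det(I_{d_j}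 + ε^{ζ−1} F_j(θ_1,…,θ_j)^{1/2}) for positive semidefinite blocks F_j of the Fisher matrix of a Markovian model and μ_j the normalized Lebesgue measure on Θ_j, the lower two-scale effective dimension defined by this iterative scheme is a lower bound for the two-scale effective dimension: d̲_ζ(ε) ≤ d_ζ(ε). -/
open MeasureTheory Matrix

private lemma jensen_log_aux {α : Type*} [MeasurableSpace α] (μ : Measure α)
    [IsProbabilityMeasure μ]
    (f w : α → ℝ) (hf : Measurable f) (hw : Measurable w)
    (hf1 : ∀ x, 1 ≤ f x) (hw0 : ∀ x, 0 ≤ w x)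
    (hwint : Integrable w μ) (hw1 : ∫ x, w x ∂μ = 1)
    (hfw : Integrable (fun x => f x * w x) μ) :
    ∫ x, Real.log (f x) * w x ∂μ ≤ Real.log (∫ x, f x * w x ∂μ) := by
  set c := ∫ x, f x * w x ∂μ with hc
  have hc1 : 1 ≤ c := by
    rw [← hw1, hc]
    exact integral_mono hwint hfw (fun x => le_mul_of_one_le_left (hw0 x) (hf1 x))
  have hc0 : (0:ℝ) < c := zero_lt_one.trans_le hc1
  have hli : Integrable (fun x => Real.log (f x) * w x) μ := by
    refine hfw.mono ((Real.measurable_log.comp hf).mul hw).aestronglyMeasurable ?_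
    filter_upwards with x
    have hfx : (0:ℝ) < f x := zero_lt_one.trans_le (hf1 x)
    have h1 : 0 ≤ Real.log (f x) := Real.log_nonneg (hf1 x)
    have h2 : Real.log (f x) ≤ f x := (Real.log_le_sub_one_of_pos hfx).trans (by linarith)
    rw [Real.norm_eq_abs, Real.norm_eq_abs, abs_of_nonneg (mul_nonneg h1 (hw0 x)),
      abs_of_nonneg (mul_nonneg (by linarith : (0:ℝ) ≤ f x) (hw0 x))]
    exact mul_le_mul_of_nonneg_right h2 (hw0 x)
  have hri : Integrable (fun x => (Real.log c - 1) * w x + f x * w x / c) μ :=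
    (hwint.const_mul _).add (hfw.div_const c)
  have hpt : ∀ x, Real.log (f x) * w x ≤ (Real.log c - 1) * w x + f x * w x / c := by
    intro x
    have hfx : (0:ℝ) < f x := zero_lt_one.trans_le (hf1 x)
    have hl : Real.log (f x) - Real.log c ≤ f x / c - 1 := by
      have := Real.log_le_sub_one_of_pos (div_pos hfx hc0)
      rwa [Real.log_div (ne_of_gt hfx) (ne_of_gt hc0)] at this
    calc Real.log (f x) * w x ≤ (Real.log c - 1 + f x / c) * w x :=
        mul_le_mul_of_nonneg_right (by linarith) (hw0 x)
      _ = (Real.log c - 1) * w x + f x * w x / c := by ring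
  calc ∫ x, Real.log (f x) * w x ∂μ
      ≤ ∫ x, ((Real.log c - 1) * w x + f x * w x / c) ∂μ := integral_mono hli hri hpt
    _ = Real.log c := by
        rw [integral_add (hwint.const_mul _) (hfw.div_const c), integral_const_mul,
          integral_div, hw1, ← hc, div_self (ne_of_gt hc0)]
        ring


/-- **iterated Jensen inequality and the lower 2sED.**
Let `(Θ_j, μ_j)`, `j = 1, …, L`, be probability spaces and for each `j` let
`g_j : Θ_1 × ⋯ × Θ_j → [1, ∞)` be measurable (realized as a function on the full product
depending only on the first `j` coordinates), with `∫ ∏_{j≤m} g_j` finite for every `m ≤ L`.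
Then
`log ∫ ∏_{j=1}^L g_j ≥ log ∫ g_1 + Σ_{m=2}^L ∫ log g_m dP_m ⊗ μ_m ⊗ ⋯`,
where `P_m` has density `∏_{j<m} g_j / ∫ ∏_{j<m} g_j` with respect to the product measure.
Consequently, taking `g_j = det(I_{d_j} + ε^{ζ−1} F_j^{1/2})` for positive semidefinite blocks
`F_j` of the Fisher matrix of a Markovian model, the lower two-scale effective dimension is a
lower bound for the two-scale effective dimension: `d̲_ζ(ε) ≤ d_ζ(ε)`. -/
theorem lower_2sED_le_2sED
    {L : ℕ} (hL : 1 ≤ L)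
    (Ω : Fin L → Type*) [∀ j, MeasurableSpace (Ω j)]
    (μ : ∀ j, Measure (Ω j)) [∀ j, IsProbabilityMeasure (μ j)]
    (g : Fin L → (∀ j, Ω j) → ℝ)
    (hdep : ∀ j : Fin L, ∀ x y : ∀ i, Ω i, (∀ i : Fin L, i ≤ j → x i = y i) → g j x = g j y)
    (hmeas : ∀ j, Measurable (g j))
    (hge1 : ∀ j x, 1 ≤ g j x)
    (hint : ∀ m : Fin L,
      Integrable (fun x => ∏ j ∈ Finset.univ.filter (fun j : Fin L => j ≤ m), g j x)
        (Measure.pi μ))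
    (ζ ε : ℝ) (hζ0 : 0 ≤ ζ) (hζ1 : ζ < 1) (hε0 : 0 < ε) (hε1 : ε < 1)
    (dd : Fin L → ℕ)
    (Fsqrt : (j : Fin L) → (∀ i, Ω i) → Matrix (Fin (dd j)) (Fin (dd j)) ℝ)
    (hFpsd : ∀ j x, (Fsqrt j x).PosSemidef)
    (hgdet : ∀ j x,
      g j x = ((1 : Matrix (Fin (dd j)) (Fin (dd j)) ℝ) + ε ^ (ζ - 1) • Fsqrt j x).det) :
    Real.log (∫ x, ∏ j, g j x ∂(Measure.pi μ))
      ≥ Real.log (∫ x, g ⟨0, hL⟩ x ∂(Measure.pi μ))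
        + ∑ m ∈ Finset.univ.filter (fun m : Fin L => 0 < (m : ℕ)),
            ∫ x, Real.log (g m x) *
              ((∏ j ∈ Finset.univ.filter (fun j : Fin L => (j : ℕ) < (m : ℕ)), g j x) /
                ∫ y, ∏ j ∈ Finset.univ.filter (fun j : Fin L => (j : ℕ) < (m : ℕ)), g j y
                  ∂(Measure.pi μ)) ∂(Measure.pi μ)
    ∧
    ζ * (∑ j, (dd j : ℝ)) +
        (Real.log (∫ x, g ⟨0, hL⟩ x ∂(Measure.pi μ))
          + ∑ m ∈ Finset.univ.filter (fun m : Fin L => 0 < (m : ℕ)),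
              ∫ x, Real.log (g m x) *
                ((∏ j ∈ Finset.univ.filter (fun j : Fin L => (j : ℕ) < (m : ℕ)), g j x) /
                  ∫ y, ∏ j ∈ Finset.univ.filter (fun j : Fin L => (j : ℕ) < (m : ℕ)), g j y
                    ∂(Measure.pi μ)) ∂(Measure.pi μ)) / |Real.log ε|
      ≤ ζ * (∑ j, (dd j : ℝ)) +
          Real.log (∫ x, ∏ j, g j x ∂(Measure.pi μ)) / |Real.log ε| := by
  classical
  set π := Measure.pi μ with hπ
  -- partial products
  let Pf : ℕ → (∀ j, Ω j) → ℝ := fun m x =>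
    ∏ j ∈ Finset.univ.filter (fun j : Fin L => (j : ℕ) < m), g j x
  let S : ℕ → ℝ := fun m => ∫ x, Pf m x ∂π
  have hPmeas : ∀ m, Measurable (Pf m) := by
    intro m
    show Measurable fun x => ∏ j ∈ Finset.univ.filter (fun j : Fin L => (j : ℕ) < m), g j x
    exact Finset.measurable_prod _ (fun j _ => hmeas j)
  have hP1 : ∀ m x, 1 ≤ Pf m x := by
    intro m x
    show (1:ℝ) ≤ ∏ j ∈ Finset.univ.filter (fun j : Fin L => (j : ℕ) < m), g j x
    calc (1:ℝ) = ∏ _j ∈ Finset.univ.filter (fun j : Fin L => (j : ℕ) < m), (1:ℝ) := by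
          rw [Finset.prod_const_one]
      _ ≤ _ := Finset.prod_le_prod (fun j _ => zero_le_one) (fun j _ => hge1 j x)
  have hPsucc : ∀ (m : Fin L) x, Pf ((m : ℕ) + 1) x = g m x * Pf (m : ℕ) x := by
    intro m x
    have hfil : Finset.univ.filter (fun j : Fin L => (j : ℕ) < (m : ℕ) + 1)
        = insert m (Finset.univ.filter (fun j : Fin L => (j : ℕ) < (m : ℕ))) := by
      ext j
      simp only [Finset.mem_filter, Finset.mem_univ, true_and, Finset.mem_insert, Fin.ext_iff]
      omega
    show (∏ j ∈ _, g j x) = _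
    rw [hfil, Finset.prod_insert (by simp)]
  have hPint : ∀ m : Fin L, Integrable (Pf ((m : ℕ) + 1)) π := by
    intro m
    have hfil : Finset.univ.filter (fun j : Fin L => (j : ℕ) < (m : ℕ) + 1)
        = Finset.univ.filter (fun j : Fin L => j ≤ m) := by
      ext j
      simp only [Finset.mem_filter, Finset.mem_univ, true_and, Fin.le_def]
      omega
    simpa [Pf, hfil] using hint m
  have hPint' : ∀ m : ℕ, m ≤ L → Integrable (Pf m) π := by
    intro m hm
    match m, hm with
    | 0, _ => simpa [Pf] using (integrable_const (1:ℝ) (μ := π))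
    | (k+1), hm => exact hPint ⟨k, by omega⟩
  have hS1 : ∀ m : ℕ, m ≤ L → 1 ≤ S m := by
    intro m hm
    have : ∫ _x, (1:ℝ) ∂π ≤ ∫ x, Pf m x ∂π :=
      integral_mono (integrable_const 1) (hPint' m hm) (fun x => hP1 m x)
    simpa using this
  have hSpos : ∀ m : ℕ, m ≤ L → (0:ℝ) < S m := fun m hm =>
    zero_lt_one.trans_le (hS1 m hm)
  -- Jensen step
  have step : ∀ m : Fin L,
      ∫ x, Real.log (g m x) * (Pf (m : ℕ) x / S (m : ℕ)) ∂π
        ≤ Real.log (S ((m : ℕ) + 1)) - Real.log (S (m : ℕ)) := by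
    intro m
    have hmle : (m : ℕ) ≤ L := le_of_lt m.isLt
    have hmle' : (m : ℕ) + 1 ≤ L := m.isLt
    have hSm := hSpos (m : ℕ) hmle
    have hSm1 := hSpos ((m : ℕ) + 1) hmle'
    have hwint : Integrable (fun x => Pf (m : ℕ) x / S (m : ℕ)) π :=
      (hPint' (m : ℕ) hmle).div_const _
    have hw1 : ∫ x, Pf (m : ℕ) x / S (m : ℕ) ∂π = 1 := by
      rw [integral_div]; exact div_self (ne_of_gt hSm)
    have hfweq : (fun x => g m x * (Pf (m : ℕ) x / S (m : ℕ)))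
        = fun x => Pf ((m : ℕ) + 1) x / S (m : ℕ) := by
      funext x; rw [hPsucc, mul_div_assoc]
    have hfw : Integrable (fun x => g m x * (Pf (m : ℕ) x / S (m : ℕ))) π := by
      rw [hfweq]; exact (hPint m).div_const _
    have hJ := jensen_log_aux π (g m) (fun x => Pf (m : ℕ) x / S (m : ℕ))
      (hmeas m) ((hPmeas (m : ℕ)).div_const _) (hge1 m)
      (fun x => div_nonneg (zero_le_one.trans (hP1 _ x)) hSm.le)
      hwint hw1 hfw
    have hcval : ∫ x, g m x * (Pf (m : ℕ) x / S (m : ℕ)) ∂π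
        = S ((m : ℕ) + 1) / S (m : ℕ) := by
      rw [hfweq, integral_div]
    rw [hcval, Real.log_div (ne_of_gt hSm1) (ne_of_gt hSm)] at hJ
    exact hJ
  -- telescoping sum
  have φdef : True := trivial
  set φ : ℕ → ℝ := fun m => Real.log (S m) with hφ
  have htel : ∑ m ∈ Finset.univ.filter (fun m : Fin L => 0 < (m : ℕ)),
      (φ ((m : ℕ) + 1) - φ (m : ℕ)) = φ L - φ 1 := by
    rw [Finset.sum_filter]
    rw [Fin.sum_univ_eq_sum_range
      (fun m => if 0 < m then φ (m + 1) - φ m else 0) L]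
    rw [← Finset.sum_filter]
    have hIco : (Finset.range L).filter (fun m => 0 < m) = Finset.Ico 1 L := by
      ext j; simp; omega
    rw [hIco, Finset.sum_Ico_eq_sum_range]
    have := Finset.sum_range_sub (fun i => φ (i + 1)) (L - 1)
    calc ∑ i ∈ Finset.range (L - 1), (φ (1 + i + 1) - φ (1 + i))
        = ∑ i ∈ Finset.range (L - 1), (φ (i + 1 + 1) - φ (i + 1)) := by
          apply Finset.sum_congr rfl; intro i _; rw [add_comm 1 i]
      _ = φ (L - 1 + 1) - φ (0 + 1) := this
      _ = φ L - φ 1 := by rw [Nat.sub_add_cancel hL]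
  -- identify endpoints
  have hPL : ∀ x, Pf L x = ∏ j, g j x := by
    intro x
    show (∏ j ∈ _, g j x) = _
    rw [Finset.filter_true_of_mem (fun j _ => j.isLt)]
  have hP1' : ∀ x, Pf 1 x = g ⟨0, hL⟩ x := by
    intro x
    have hfil : Finset.univ.filter (fun j : Fin L => (j : ℕ) < 1) = {⟨0, hL⟩} := by
      ext j
      simp only [Finset.mem_filter, Finset.mem_univ, true_and, Finset.mem_singleton,
        Fin.ext_iff]
      omega
    show (∏ j ∈ _, g j x) = _
    rw [hfil, Finset.prod_singleton]
  have hSL : S L = ∫ x, ∏ j, g j x ∂π := by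
    simp only [S]; congr 1; funext x; exact hPL x
  have hS1' : S 1 = ∫ x, g ⟨0, hL⟩ x ∂π := by
    simp only [S]; congr 1; funext x; exact hP1' x
  -- main inequality
  have main : Real.log (∫ x, ∏ j, g j x ∂π)
      ≥ Real.log (∫ x, g ⟨0, hL⟩ x ∂π)
        + ∑ m ∈ Finset.univ.filter (fun m : Fin L => 0 < (m : ℕ)),
            ∫ x, Real.log (g m x) * (Pf (m : ℕ) x / S (m : ℕ)) ∂π := by
    have hsum : ∑ m ∈ Finset.univ.filter (fun m : Fin L => 0 < (m : ℕ)),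
        (∫ x, Real.log (g m x) * (Pf (m : ℕ) x / S (m : ℕ)) ∂π)
        ≤ φ L - φ 1 := by
      rw [← htel]
      exact Finset.sum_le_sum (fun m _ => step m)
    have hφL : φ L = Real.log (∫ x, ∏ j, g j x ∂π) := by rw [hφ]; simp only []; rw [hSL]
    have hφ1 : φ 1 = Real.log (∫ x, g ⟨0, hL⟩ x ∂π) := by rw [hφ]; simp only []; rw [hS1']
    rw [hφL, hφ1] at hsum
    linarith
  refine ⟨main, ?_⟩
  have habs : (0:ℝ) < |Real.log ε| :=
    abs_pos.mpr (ne_of_lt (Real.log_neg hε0 hε1))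
  exact add_le_add_right ((div_le_div_iff_of_pos_right habs).mpr main) _
end
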